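/- For all integers n₁, n₂, n₃ ≥ 0 there exist polynomials p, q, r ∈ ℂ[X], not all three zero, with deg p ≤ n₁, deg q ≤ n₂, deg r ≤ n₃, such that the entire function f(z) = p(z) + q(z)·e^z + r(z)·e^{2z} vanishes to order at least n₁+n₂+n₃+2 at z = 0, i.e. the k-th iterated derivative of f at 0 equals 0 for every k ≤ n₁+n₂+n₃+1. Moreover, such a triple is unique up to a common multiplicative factor: if (p,q,r) and (p',q',r') are two such triples, each with not all entries zero, then there exists a nonzero c ∈ ℂ with p' = c·p, q' = c·q and r' = c·r. -/

import Mathlib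

open Polynomial Finset

noncomputable def TT (c : ℂ) : ℂ[X] →ₗ[ℂ] ℂ[X] :=
  Polynomial.derivative + c • LinearMap.id

lemma TT_apply (c : ℂ) (s : ℂ[X]) : TT c s = derivative s + c • s := rfl

noncomputable def EE (c : ℂ) (k : ℕ) (s : ℂ[X]) : ℂ := ((TT c ^ k) s).eval 0

lemma TT_pow (b c : ℂ) (k : ℕ) (s : ℂ[X]) :
    (TT c ^ k) s = ∑ i ∈ range (k + 1),
      ((k.choose i : ℂ) * (c - b) ^ (k - i)) • (TT b ^ i) s := by
  have hTc : TT c = TT b + (c - b) • (1 : Module.End ℂ ℂ[X]) := by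
    apply LinearMap.ext; intro t
    show derivative t + c • t = derivative t + b • t + (c - b) • t
    rw [sub_smul]; abel
  have hcomm : Commute (TT b) ((c - b) • (1 : Module.End ℂ ℂ[X])) := by
    simp [Commute, SemiconjBy]
  rw [hTc, hcomm.add_pow]
  rw [LinearMap.sum_apply]
  refine Finset.sum_congr rfl fun i hi => ?_
  have h1 : ((c - b) • (1 : Module.End ℂ ℂ[X])) ^ (k - i) =
      ((c - b) ^ (k - i)) • (1 : Module.End ℂ ℂ[X]) := by
    rw [_root_.smul_pow, one_pow]
  have h2 : ((k.choose i : ℕ) : Module.End ℂ ℂ[X]) = (k.choose i : ℂ) • 1 := by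
    rw [← nsmul_one, ← Nat.cast_smul_eq_nsmul ℂ]
  rw [h1, h2]
  show ((TT b ^ i) ((((c - b) ^ (k - i)) • (1 : Module.End ℂ ℂ[X]))
    (((k.choose i : ℂ) • (1 : Module.End ℂ ℂ[X])) s))) = _
  simp [smul_smul, map_smul, mul_comm]

lemma EE_shift (b c : ℂ) (k : ℕ) (s : ℂ[X]) :
    EE c k s = ∑ i ∈ range (k + 1),
      ((k.choose i : ℂ) * (c - b) ^ (k - i)) * EE b i s := by
  unfold EE
  rw [TT_pow b c k s, eval_finset_sum]
  refine Finset.sum_congr rfl fun i _ => ?_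
  simp [smul_eq_C_mul]

lemma TT_zero_pow (j : ℕ) (s : ℂ[X]) : (TT 0 ^ j) s = derivative^[j] s := by
  induction j with
  | zero => simp
  | succ j ih =>
    rw [pow_succ', Module.End.mul_apply, Function.iterate_succ_apply', ← ih, TT_apply]
    simp

lemma EE_zero (j : ℕ) (s : ℂ[X]) : EE 0 j s = (j.factorial : ℂ) * s.coeff j := by
  unfold EE
  rw [TT_zero_pow, ← coeff_zero_eq_eval_zero, coeff_iterate_derivative]
  simp [Nat.descFactorial_self, mul_comm]

lemma EE_kill {c : ℂ} {n : ℕ} {s : ℂ[X]} (hs : s.degree ≤ (n : ℕ))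
    (h : ∀ j ≤ n, EE c j s = 0) : s = 0 := by
  have h0 : ∀ j ≤ n, EE 0 j s = 0 := by
    intro j hj
    rw [EE_shift c 0 j s]
    refine Finset.sum_eq_zero fun i hi => ?_
    rw [h i (le_trans (Nat.lt_succ_iff.mp (mem_range.mp hi)) hj), mul_zero]
  ext j
  rcases le_or_gt j n with hj | hj
  · have := h0 j hj
    rw [EE_zero] at this
    have hf : (j.factorial : ℂ) ≠ 0 := Nat.cast_ne_zero.mpr j.factorial_ne_zero
    simpa [hf] using this
  · rw [coeff_eq_zero_of_degree_lt (lt_of_le_of_lt hs (by exact_mod_cast hj)), coeff_zero]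

lemma TT_inj {c : ℂ} (hc : c ≠ 0) : Function.Injective (TT c) := by
  rw [← LinearMap.ker_eq_bot, LinearMap.ker_eq_bot']
  intro s hs
  by_contra hne
  have h1 : c • s = -derivative s := by
    have h := hs
    rw [TT_apply] at h
    linear_combination (norm := skip) h - derivative s
    abel
  have hdeg : s.degree = (c • s).degree := by
    rw [smul_eq_C_mul, degree_C_mul (by exact hc)]
  have : s.degree < s.degree := by
    calc s.degree = (c • s).degree := hdeg
    _ = (-derivative s).degree := by rw [h1]
    _ = (derivative s).degree := degree_neg _
    _ < s.degree := degree_derivative_lt hne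
  exact absurd this (lt_irrefl _)

lemma TT_pow_inj {c : ℂ} (hc : c ≠ 0) (m : ℕ) : Function.Injective (TT c ^ m) := by
  induction m with
  | zero => intro x y h; simpa using h
  | succ m ih =>
    intro x y hxy
    simp only [pow_succ, Module.End.mul_apply] at hxy
    exact TT_inj hc (ih hxy)

lemma TT_degree_le (c : ℂ) (s : ℂ[X]) : (TT c s).degree ≤ s.degree := by
  rw [TT_apply]
  exact le_trans (degree_add_le _ _) (max_le (degree_derivative_le) (degree_smul_le _ _))

set_option maxHeartbeats 800000 in
lemma TT_pow_degree_le (c : ℂ) (m : ℕ) : ∀ s : ℂ[X], ((TT c ^ m) s).degree ≤ s.degree := by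
  induction m with
  | zero => intro s; simp
  | succ m ih =>
    intro s
    simp only [pow_succ, Module.End.mul_apply]
    exact le_trans (ih (TT c s)) (TT_degree_le c s)

lemma EE_pow_add (c : ℂ) (m i : ℕ) (s : ℂ[X]) :
    EE c (m + i) s = EE c i ((TT c ^ m) s) := by
  unfold EE
  rw [← Module.End.mul_apply, ← pow_add, add_comm i m]

lemma EE_high_zero {c : ℂ} {n j : ℕ} {s : ℂ[X]} (hs : s.degree ≤ (n : ℕ)) (hj : n < j)
    (hc : c = 0) : EE c j s = 0 := by
  subst hc
  unfold EE
  rw [TT_zero_pow, Polynomial.iterate_derivative_eq_zero, eval_zero]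
  exact lt_of_le_of_lt (natDegree_le_iff_degree_le.mpr hs) hj

lemma EE_zero_poly (c : ℂ) (j : ℕ) : EE c j 0 = 0 := by simp [EE]

lemma EE_pair {c : ℂ} (hc : c ≠ 0) {m n : ℕ} {u v : ℂ[X]}
    (hu : u.degree ≤ (m : ℕ)) (hv : v.degree ≤ (n : ℕ))
    (h : ∀ j ≤ m + n + 1, EE 0 j u + EE c j v = 0) : u = 0 ∧ v = 0 := by
  have hv0 : v = 0 := by
    have h1 : ∀ i ≤ n, EE c i ((TT c ^ (m + 1)) v) = 0 := by
      intro i hi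
      rw [← EE_pow_add]
      have := h (m + 1 + i) (by omega)
      rwa [EE_high_zero hu (by omega) rfl, zero_add] at this
    have h2 := EE_kill (le_trans (TT_pow_degree_le c (m + 1) v) hv) h1
    exact TT_pow_inj hc (m + 1) (h2.trans (map_zero _).symm)
  refine ⟨EE_kill (c := 0) hu fun j hj => ?_, hv0⟩
  have := h j (by omega)
  rwa [hv0, EE_zero_poly, add_zero] at this

lemma EE_core {n₁ n₂ n₃ : ℕ} {p q r : ℂ[X]}
    (hp : p.degree ≤ (n₁ : ℕ)) (hq : q.degree ≤ (n₂ : ℕ)) (hr : r.degree ≤ (n₃ : ℕ))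
    (h : ∀ k ≤ n₁ + n₂ + n₃ + 2, EE 0 k p + EE 1 k q + EE 2 k r = 0) :
    p = 0 ∧ q = 0 ∧ r = 0 := by
  have hA : ∀ j ≤ n₂ + n₃ + 1,
      EE 1 j ((TT 1 ^ (n₁ + 1)) q) + EE 2 j ((TT 2 ^ (n₁ + 1)) r) = 0 := by
    intro j hj
    rw [← EE_pow_add, ← EE_pow_add]
    have := h (n₁ + 1 + j) (by omega)
    rwa [EE_high_zero hp (by omega) rfl, zero_add] at this
  have hB : ∀ j ≤ n₂ + n₃ + 1,
      EE 0 j ((TT 1 ^ (n₁ + 1)) q) + EE 1 j ((TT 2 ^ (n₁ + 1)) r) = 0 := by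
    intro j hj
    rw [EE_shift 1 0 j _, EE_shift 2 1 j _]
    have hcoef : (0 : ℂ) - 1 = (1 : ℂ) - 2 := by norm_num
    rw [hcoef, ← Finset.sum_add_distrib]
    refine Finset.sum_eq_zero fun i hi => ?_
    have hi' : i ≤ n₂ + n₃ + 1 := le_trans (Nat.lt_succ_iff.mp (mem_range.mp hi)) hj
    rw [← mul_add, hA i hi', mul_zero]
  obtain ⟨hq₁, hr₁⟩ := EE_pair one_ne_zero
    (le_trans (TT_pow_degree_le 1 (n₁ + 1) q) hq)
    (le_trans (TT_pow_degree_le 2 (n₁ + 1) r) hr) hB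
  have hq0 : q = 0 := TT_pow_inj one_ne_zero _ (hq₁.trans (map_zero _).symm)
  have hr0 : r = 0 := TT_pow_inj two_ne_zero _ (hr₁.trans (map_zero _).symm)
  refine ⟨EE_kill (c := 0) hp fun j hj => ?_, hq0, hr0⟩
  have := h j (by omega)
  rwa [hq0, hr0, EE_zero_poly, EE_zero_poly, add_zero, add_zero] at this

lemma deriv_step (p q r : ℂ[X]) :
    deriv (fun z : ℂ => p.eval z + q.eval z * Complex.exp z + r.eval z * Complex.exp (2 * z))
    = fun z : ℂ => (TT 0 p).eval z + (TT 1 q).eval z * Complex.exp z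
        + (TT 2 r).eval z * Complex.exp (2 * z) := by
  funext z
  have h1 : HasDerivAt (fun z : ℂ => p.eval z) (p.derivative.eval z) z := p.hasDerivAt z
  have hexp : HasDerivAt Complex.exp (Complex.exp z) z := Complex.hasDerivAt_exp z
  have h2 : HasDerivAt (fun z : ℂ => q.eval z * Complex.exp z)
      (q.derivative.eval z * Complex.exp z + q.eval z * Complex.exp z) z :=
    (q.hasDerivAt z).mul hexp
  have hexp2 : HasDerivAt (fun z : ℂ => Complex.exp (2 * z)) (Complex.exp (2 * z) * 2) z := by
    have h := (Complex.hasDerivAt_exp (2 * z)).comp z ((hasDerivAt_id z).const_mul (2 : ℂ))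
    simp at h; exact h
  have h3 : HasDerivAt (fun z : ℂ => r.eval z * Complex.exp (2 * z))
      (r.derivative.eval z * Complex.exp (2 * z) + r.eval z * (Complex.exp (2 * z) * 2)) z :=
    (r.hasDerivAt z).mul hexp2
  have hd : HasDerivAt
      (fun z : ℂ => p.eval z + q.eval z * Complex.exp z + r.eval z * Complex.exp (2 * z)) _ z :=
    (h1.add h2).add h3
  rw [hd.deriv]
  simp only [TT_apply, eval_add, eval_smul, one_smul, smul_eq_mul]
  ring

lemma iter_fun (k : ℕ) (p q r : ℂ[X]) :
    iteratedDeriv k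
      (fun z : ℂ => p.eval z + q.eval z * Complex.exp z + r.eval z * Complex.exp (2 * z))
    = fun z : ℂ => ((TT 0 ^ k) p).eval z + ((TT 1 ^ k) q).eval z * Complex.exp z
        + ((TT 2 ^ k) r).eval z * Complex.exp (2 * z) := by
  induction k generalizing p q r with
  | zero => simp
  | succ k ih =>
    rw [iteratedDeriv_succ', deriv_step, ih]
    funext z
    simp only [← Module.End.mul_apply, ← pow_succ, ← pow_succ']

lemma bridge (k : ℕ) (p q r : ℂ[X]) :
    iteratedDeriv k
      (fun z : ℂ => p.eval z + q.eval z * Complex.exp z + r.eval z * Complex.exp (2 * z)) 0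
    = EE 0 k p + EE 1 k q + EE 2 k r := by
  rw [iter_fun]
  simp [EE, Complex.exp_zero]

lemma EE_comb (c : ℂ) (k : ℕ) (a b : ℂ) (x y : ℂ[X]) :
    EE c k (a • x - b • y) = a * EE c k x - b * EE c k y := by
  simp [EE, map_sub, map_smul, smul_eq_mul]

lemma deg_helper {p : ℂ[X]} {n : ℕ} (h : p.degree < ((n + 1 : ℕ) : WithBot ℕ)) :
    p.degree ≤ (n : ℕ) := by
  rcases eq_or_ne p 0 with rfl | hp
  · simp
  · rw [degree_eq_natDegree hp] at h ⊢
    exact_mod_cast Nat.lt_succ_iff.mp (by exact_mod_cast h)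

noncomputable def Phi (k : ℕ) : (ℂ[X] × ℂ[X] × ℂ[X]) →ₗ[ℂ] ℂ :=
  ((Polynomial.leval 0).comp (TT 0 ^ k)).comp (LinearMap.fst ℂ ℂ[X] (ℂ[X] × ℂ[X]))
  + ((Polynomial.leval 0).comp (TT 1 ^ k)).comp
      ((LinearMap.fst ℂ ℂ[X] ℂ[X]).comp (LinearMap.snd ℂ ℂ[X] (ℂ[X] × ℂ[X])))
  + ((Polynomial.leval 0).comp (TT 2 ^ k)).comp
      ((LinearMap.snd ℂ ℂ[X] ℂ[X]).comp (LinearMap.snd ℂ ℂ[X] (ℂ[X] × ℂ[X])))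

lemma Phi_apply (k : ℕ) (v : ℂ[X] × ℂ[X] × ℂ[X]) :
    Phi k v = EE 0 k v.1 + EE 1 k v.2.1 + EE 2 k v.2.2 := rfl

theorem hermite_pade_exists_unique (n₁ n₂ n₃ : ℕ) :
    (∃ p q r : ℂ[X], ¬(p = 0 ∧ q = 0 ∧ r = 0) ∧
      p.degree ≤ (n₁ : ℕ) ∧ q.degree ≤ (n₂ : ℕ) ∧ r.degree ≤ (n₃ : ℕ) ∧
      ∀ k : ℕ, k ≤ n₁ + n₂ + n₃ + 1 →
        iteratedDeriv k
          (fun z : ℂ => p.eval z + q.eval z * Complex.exp z + r.eval z * Complex.exp (2 * z))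
          0 = 0) ∧
    (∀ p q r p' q' r' : ℂ[X],
      (¬(p = 0 ∧ q = 0 ∧ r = 0) ∧
        p.degree ≤ (n₁ : ℕ) ∧ q.degree ≤ (n₂ : ℕ) ∧ r.degree ≤ (n₃ : ℕ) ∧
        ∀ k : ℕ, k ≤ n₁ + n₂ + n₃ + 1 →
          iteratedDeriv k
            (fun z : ℂ => p.eval z + q.eval z * Complex.exp z + r.eval z * Complex.exp (2 * z))
            0 = 0) →
      (¬(p' = 0 ∧ q' = 0 ∧ r' = 0) ∧
        p'.degree ≤ (n₁ : ℕ) ∧ q'.degree ≤ (n₂ : ℕ) ∧ r'.degree ≤ (n₃ : ℕ) ∧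
        ∀ k : ℕ, k ≤ n₁ + n₂ + n₃ + 1 →
          iteratedDeriv k
            (fun z : ℂ => p'.eval z + q'.eval z * Complex.exp z + r'.eval z * Complex.exp (2 * z))
            0 = 0) →
      ∃ c : ℂ, c ≠ 0 ∧ p' = C c * p ∧ q' = C c * q ∧ r' = C c * r) := by
  constructor
  · -- existence
    haveI h₁ : Module.Finite ℂ (degreeLT ℂ (n₁ + 1)) :=
      Module.Finite.equiv (degreeLTEquiv ℂ (n₁ + 1)).symm
    haveI h₂ : Module.Finite ℂ (degreeLT ℂ (n₂ + 1)) :=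
      Module.Finite.equiv (degreeLTEquiv ℂ (n₂ + 1)).symm
    haveI h₃ : Module.Finite ℂ (degreeLT ℂ (n₃ + 1)) :=
      Module.Finite.equiv (degreeLTEquiv ℂ (n₃ + 1)).symm
    set J : (degreeLT ℂ (n₁ + 1) × (degreeLT ℂ (n₂ + 1) × degreeLT ℂ (n₃ + 1)))
        →ₗ[ℂ] (ℂ[X] × ℂ[X] × ℂ[X]) :=
      (Submodule.subtype _).prodMap
        ((Submodule.subtype _).prodMap (Submodule.subtype _)) with hJ
    set L : (degreeLT ℂ (n₁ + 1) × (degreeLT ℂ (n₂ + 1) × degreeLT ℂ (n₃ + 1)))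
        →ₗ[ℂ] (Fin (n₁ + n₂ + n₃ + 2) → ℂ) :=
      LinearMap.pi (fun k => (Phi k.val).comp J) with hL
    have hrank : ¬ Function.Injective L := by
      intro hinj
      have hle := LinearMap.finrank_le_finrank_of_injective hinj
      rw [Module.finrank_fin_fun, Module.finrank_prod, Module.finrank_prod,
        (degreeLTEquiv ℂ (n₁ + 1)).finrank_eq, (degreeLTEquiv ℂ (n₂ + 1)).finrank_eq,
        (degreeLTEquiv ℂ (n₃ + 1)).finrank_eq, Module.finrank_fin_fun,
        Module.finrank_fin_fun, Module.finrank_fin_fun] at hle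
      omega
    obtain ⟨x, y, hxy, hne⟩ := Function.not_injective_iff.mp hrank
    set v := x - y with hv
    have hv0 : v ≠ 0 := sub_ne_zero_of_ne hne
    have hLv : L v = 0 := by rw [hv, map_sub, hxy, sub_self]
    refine ⟨(v.1 : ℂ[X]), (v.2.1 : ℂ[X]), (v.2.2 : ℂ[X]), ?_, ?_, ?_, ?_, ?_⟩
    · rintro ⟨hp, hq, hr⟩
      apply hv0
      refine Prod.ext ?_ (Prod.ext ?_ ?_) <;> exact Subtype.ext (by assumption)
    · exact deg_helper (mem_degreeLT.mp v.1.2)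
    · exact deg_helper (mem_degreeLT.mp v.2.1.2)
    · exact deg_helper (mem_degreeLT.mp v.2.2.2)
    · intro k hk
      rw [bridge]
      have hk' : k < n₁ + n₂ + n₃ + 2 := by omega
      have := congrFun hLv ⟨k, hk'⟩
      rw [LinearMap.pi_apply] at this
      simpa [Phi_apply, hJ] using this
  · -- uniqueness
    intro p q r p' q' r' ⟨hne, hp, hq, hr, hvan⟩ ⟨hne', hp', hq', hr', hvan'⟩
    set N := n₁ + n₂ + n₃ with hN
    have hE : ∀ k ≤ N + 1, EE 0 k p + EE 1 k q + EE 2 k r = 0 := by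
      intro k hk
      rw [← bridge]
      exact hvan k hk
    have hE' : ∀ k ≤ N + 1, EE 0 k p' + EE 1 k q' + EE 2 k r' = 0 := by
      intro k hk
      rw [← bridge]
      exact hvan' k hk
    set a := EE 0 (N + 2) p + EE 1 (N + 2) q + EE 2 (N + 2) r with ha
    set a' := EE 0 (N + 2) p' + EE 1 (N + 2) q' + EE 2 (N + 2) r' with ha'
    have hA : a ≠ 0 := by
      intro h0
      refine hne (EE_core hp hq hr fun k hk => ?_)
      rcases Nat.lt_or_ge k (N + 2) with hlt | hge
      · exact hE k (by omega)
      · have : k = N + 2 := by omega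
        rw [this, ← ha]; exact h0
    have hA' : a' ≠ 0 := by
      intro h0
      refine hne' (EE_core hp' hq' hr' fun k hk => ?_)
      rcases Nat.lt_or_ge k (N + 2) with hlt | hge
      · exact hE' k (by omega)
      · have : k = N + 2 := by omega
        rw [this, ← ha']; exact h0
    have hdeg1 : (a • p' - a' • p).degree ≤ (n₁ : ℕ) :=
      le_trans (degree_sub_le _ _)
        (max_le (le_trans (degree_smul_le _ _) hp') (le_trans (degree_smul_le _ _) hp))
    have hdeg2 : (a • q' - a' • q).degree ≤ (n₂ : ℕ) :=
      le_trans (degree_sub_le _ _)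
        (max_le (le_trans (degree_smul_le _ _) hq') (le_trans (degree_smul_le _ _) hq))
    have hdeg3 : (a • r' - a' • r).degree ≤ (n₃ : ℕ) :=
      le_trans (degree_sub_le _ _)
        (max_le (le_trans (degree_smul_le _ _) hr') (le_trans (degree_smul_le _ _) hr))
    have hcomb : ∀ k ≤ N + 2,
        EE 0 k (a • p' - a' • p) + EE 1 k (a • q' - a' • q) + EE 2 k (a • r' - a' • r) = 0 := by
      intro k hk
      rw [EE_comb, EE_comb, EE_comb]
      rcases Nat.lt_or_ge k (N + 2) with hlt | hge
      · have h1 := hE k (by omega)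
        have h2 := hE' k (by omega)
        linear_combination a * h2 - a' * h1
      · have hkk : k = N + 2 := by omega
        subst hkk
        linear_combination a * ha' - a' * ha
    obtain ⟨e1, e2, e3⟩ := EE_core hdeg1 hdeg2 hdeg3 hcomb
    have hp2 : a • p' = a' • p := by rwa [sub_eq_zero] at e1
    have hq2 : a • q' = a' • q := by rwa [sub_eq_zero] at e2
    have hr2 : a • r' = a' • r := by rwa [sub_eq_zero] at e3
    refine ⟨a⁻¹ * a', mul_ne_zero (inv_ne_zero hA) hA', ?_, ?_, ?_⟩
    · rw [← smul_eq_C_mul, ← smul_smul, ← hp2, smul_smul, inv_mul_cancel₀ hA, one_smul]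
    · rw [← smul_eq_C_mul, ← smul_smul, ← hq2, smul_smul, inv_mul_cancel₀ hA, one_smul]
    · rw [← smul_eq_C_mul, ← smul_smul, ← hr2, smul_smul, inv_mul_cancel₀ hA, one_smul]
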